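/- The function g(y) = (e^y − 1)^α / y is convex on (0, ∞) for every α ∈ [0, 1]. -/

import Mathlib

open Real Set

lemma poly_ineq (α y e : ℝ) (h0 : 0 ≤ α) (h1 : α ≤ 1) (hy : 0 < y)
    (hq : 1 + y + y^2/2 ≤ e) :
    0 ≤ α^2*y^2*e^2 - α*y*e*(y + 2*(e - 1)) + 2*(e - 1)^2 := by
  have hu : 0 < e - 1 := by nlinarith
  by_cases hc : 4*y*(e-1) + y^2 ≤ 4*(e-1)^2
  · nlinarith [sq_nonneg (α*y*e - (y+2*(e-1))/2)]
  · push_neg at hc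
    have hy2 : y < 1/2 := by nlinarith
    have hB : 2*y*e ≤ y + 2*(e-1) := by nlinarith
    have h2p : (0:ℝ) ≤ y^2 - 2*y + 2 := by nlinarith [sq_nonneg (y-1)]
    have hψ : 0 ≤ (y^2 - 2*y + 2)*e - 2 := by
      nlinarith [mul_le_mul_of_nonneg_left hq h2p, sq_nonneg (y^2)]
    have h1p : 0 ≤ y^2*e^2 - y*e*(y+2*(e-1)) + 2*(e-1)^2 := by
      nlinarith [mul_nonneg hu.le hψ]
    have hye : 0 ≤ y*e := mul_nonneg hy.le (by nlinarith)
    have hAB : (α+1)*(y^2*e^2) ≤ y*e*(y+2*(e-1)) := by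
      nlinarith [mul_le_mul_of_nonneg_left hB hye,
        mul_nonneg (sub_nonneg.2 h1) (mul_nonneg (sq_nonneg y) (sq_nonneg e))]
    nlinarith [h1p, mul_nonneg (sub_nonneg.2 h1) (sub_nonneg.2 hAB)]

theorem stmt_1 (α : ℝ) (h0 : 0 ≤ α) (h1 : α ≤ 1) :
    ConvexOn ℝ (Set.Ioi (0 : ℝ)) (fun y => (Real.exp y - 1) ^ α / y) := by
  have hone : ∀ x : ℝ, 0 < x → 1 < Real.exp x := fun x hx => by
    rw [← Real.exp_zero]; exact Real.exp_lt_exp.2 hx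
  set F1 : ℝ → ℝ := fun x =>
    ((Real.exp x * α) * ((Real.exp x - 1) ^ (α-1) * x) - (Real.exp x - 1) ^ α) / x^2 with hF1def
  set F2 : ℝ → ℝ := fun x =>
    (Real.exp x - 1) ^ (α-2) / x^3 *
      (α^2*x^2*(Real.exp x)^2 - α*x*Real.exp x*(x + 2*(Real.exp x - 1)) + 2*(Real.exp x - 1)^2)
    with hF2def
  apply convexOn_of_hasDerivWithinAt2_nonneg (f' := F1) (f'' := F2) (convex_Ioi 0)
  · -- continuity
    apply ContinuousOn.div
    · exact (continuous_exp.sub continuous_const).continuousOn.rpow_const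
        (fun x hx => Or.inl (sub_ne_zero.2 (ne_of_gt (hone x hx))))
    · exact continuousOn_id
    · exact fun x hx => ne_of_gt hx
  · -- first derivative
    rw [interior_Ioi]
    intro y hy
    have hy0 : (0:ℝ) < y := hy
    have hune : Real.exp y - 1 ≠ 0 := sub_ne_zero.2 (ne_of_gt (hone y hy0))
    have hinner : HasDerivAt (fun x : ℝ => Real.exp x - 1) (Real.exp y) y :=
      (Real.hasDerivAt_exp y).sub_const 1
    have hg : HasDerivAt (fun x : ℝ => (Real.exp x - 1) ^ α)
        (Real.exp y * α * (Real.exp y - 1) ^ (α - 1)) y :=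
      hinner.rpow_const (Or.inl hune)
    have h := hg.div (hasDerivAt_id y) (ne_of_gt hy0)
    have heq : (Real.exp y * α * (Real.exp y - 1) ^ (α - 1) * id y -
        (Real.exp y - 1) ^ α * 1) / (id y)^2 = F1 y := by
      simp only [hF1def, id_eq]
      ring
    rw [heq] at h
    exact h.hasDerivWithinAt
  · -- second derivative
    rw [interior_Ioi]
    intro y hy
    have hy0 : (0:ℝ) < y := hy
    have hune : Real.exp y - 1 ≠ 0 := sub_ne_zero.2 (ne_of_gt (hone y hy0))
    have hinner : HasDerivAt (fun x : ℝ => Real.exp x - 1) (Real.exp y) y :=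
      (Real.hasDerivAt_exp y).sub_const 1
    have hg : HasDerivAt (fun x : ℝ => (Real.exp x - 1) ^ α)
        (Real.exp y * α * (Real.exp y - 1) ^ (α - 1)) y :=
      hinner.rpow_const (Or.inl hune)
    have hg1 : HasDerivAt (fun x : ℝ => (Real.exp x - 1) ^ (α-1))
        (Real.exp y * (α-1) * (Real.exp y - 1) ^ (α - 1 - 1)) y :=
      hinner.rpow_const (Or.inl hune)
    have hA : HasDerivAt (fun x : ℝ => Real.exp x * α) (Real.exp y * α) y :=
      (Real.hasDerivAt_exp y).mul_const α
    have hB : HasDerivAt (fun x : ℝ => (Real.exp x - 1) ^ (α-1) * x)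
        ((Real.exp y * (α-1) * (Real.exp y - 1) ^ (α - 1 - 1)) * y
          + (Real.exp y - 1) ^ (α-1) * 1) y := hg1.mul (hasDerivAt_id y)
    have hP := (hA.mul hB).sub hg
    have hQ : HasDerivAt (fun x : ℝ => x^2) (2*y) y := by
      simpa using hasDerivAt_pow 2 y
    have h := hP.div hQ (by positivity)
    have eadd : ∀ β : ℝ, (Real.exp y - 1) ^ (β+1) = (Real.exp y - 1) ^ β * (Real.exp y - 1) :=
      fun β => Real.rpow_add_one hune β
    have eq1 : (Real.exp y - 1) ^ (α-1) = (Real.exp y - 1) ^ (α-2) * (Real.exp y - 1) := by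
      have := eadd (α-2); rw [show α-2+1 = α-1 by ring] at this; exact this
    have eq2 : (Real.exp y - 1) ^ α = (Real.exp y - 1) ^ (α-1) * (Real.exp y - 1) := by
      have := eadd (α-1); rw [show α-1+1 = α by ring] at this; exact this
    have hyne : y ≠ 0 := ne_of_gt hy0
    refine HasDerivAt.hasDerivWithinAt ?_
    convert h using 1
    case e'_4 => rfl
    case e'_8 => rfl
    simp only [Pi.sub_apply, Pi.mul_apply]
    rw [show α-1-1 = α-2 by ring, eq2, eq1]
    simp only [hF2def]
    field_simp
    ring
  · -- nonnegativity
    rw [interior_Ioi]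
    intro y hy
    have hy0 : (0:ℝ) < y := hy
    have hq := Real.quadratic_le_exp_of_nonneg hy0.le
    simp only [hF2def]
    apply mul_nonneg
    · exact div_nonneg (Real.rpow_nonneg (by nlinarith) _) (by positivity)
    · exact poly_ineq α y (Real.exp y) h0 h1 hy0 hq
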